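/- Let α=(α_1,…,α_{2s}) be a composition of n with an even number of parts and let β=(α_k,α_{k+1},…,α_{2s},α_1,…,α_{k−1}) be any cyclic shift of α. Then the circular fence posets F̄(α) and F̄(β) have the same rank sequence: for every j, the number of lower ideals of F̄(α) of size j equals the number of lower ideals of F̄(β) of size j. -/

import Mathlib

attribute [local instance] Classical.propDecidable

noncomputable section

/-- `α` is a composition: a nonempty list of positive integers. -/
def IsComposition (α : List ℕ) : Prop := α ≠ [] ∧ ∀ p ∈ α, 0 < p

/-- The 0-based index of the segment of the composition `α` containing edge `e`,
where edge `e` joins nodes `e` and `e+1` (nodes are 0-indexed, so node `i`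
is the element `x_{i+1}` of the fence). -/
def segIdx (α : List ℕ) (e : ℕ) : ℕ :=
  ((List.range α.length).filter fun j => decide ((α.take (j + 1)).sum ≤ e)).length

/-- Edge `e` of the fence of `α` points upwards (node `e` ⪯ node `e+1`):
edges in odd (1-based) segments point up, edges in even segments point down. -/
def upEdge (α : List ℕ) (e : ℕ) : Prop := Even (segIdx α e)

/-- The defining relations of the fence poset `F(α)` on `Fin (α.sum + 1)`:
`fenceStep α x y` holds iff `x ⪯ y` is one of the generating (cover) relations. -/
def fenceStep (α : List ℕ) (x y : Fin (α.sum + 1)) : Prop :=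
  (y.val = x.val + 1 ∧ upEdge α x.val) ∨ (x.val = y.val + 1 ∧ ¬ upEdge α y.val)

/-- The order of the fence poset `F(α)`, i.e. the partial order generated by
the defining relations. -/
def fenceLE (α : List ℕ) : Fin (α.sum + 1) → Fin (α.sum + 1) → Prop :=
  Relation.ReflTransGen (fenceStep α)

/-- Lower (order) ideals of the fence poset `F(α)`. -/
def IsFenceIdeal (α : List ℕ) (I : Finset (Fin (α.sum + 1))) : Prop :=
  ∀ x y, fenceLE α x y → y ∈ I → x ∈ I

/-- `fenceRank α k` is the number of lower ideals of `F(α)` of size `k`;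
the rank sequence of `F(α)` is `fenceRank α 0, …, fenceRank α (α.sum + 1)`. -/
def fenceRank (α : List ℕ) (k : ℕ) : ℕ :=
  Nat.card {I : Finset (Fin (α.sum + 1)) // IsFenceIdeal α I ∧ I.card = k}

/-- Defining relations of the circular fence poset `F̄(α)` on `Fin α.sum`:
as for the fence, but node `α.sum` (that is, `x_{n+1}`) is identified with node `0`. -/
def cStep (α : List ℕ) (x y : Fin α.sum) : Prop :=
  (y.val = (x.val + 1) % α.sum ∧ upEdge α x.val) ∨
  (x.val = (y.val + 1) % α.sum ∧ ¬ upEdge α y.val)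

/-- The order of the circular fence poset `F̄(α)`. -/
def cLE (α : List ℕ) : Fin α.sum → Fin α.sum → Prop :=
  Relation.ReflTransGen (cStep α)

/-- Lower (order) ideals of the circular fence poset `F̄(α)`. -/
def IsCIdeal (α : List ℕ) (I : Finset (Fin α.sum)) : Prop :=
  ∀ x y, cLE α x y → y ∈ I → x ∈ I

/-- `cRank α k` is the number of lower ideals of `F̄(α)` of size `k`;
the rank sequence of `F̄(α)` is `cRank α 0, …, cRank α α.sum`. -/
def cRank (α : List ℕ) (k : ℕ) : ℕ :=
  Nat.card {I : Finset (Fin α.sum) // IsCIdeal α I ∧ I.card = k}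

/-- The sequence `a 0, …, a m` is unimodal. -/
def Unimodal (a : ℕ → ℕ) (m : ℕ) : Prop :=
  ∃ j ≤ m, (∀ i < j, a i ≤ a (i + 1)) ∧ ∀ i, j ≤ i → i < m → a (i + 1) ≤ a i

/-- The sequence `a 0, …, a m` is bottom interlacing:
`a m ≤ a 0 ≤ a (m-1) ≤ a 1 ≤ ⋯ ≤ a ⌊m/2⌋`. -/
def BottomInterlacing (a : ℕ → ℕ) (m : ℕ) : Prop :=
  (∀ i, 2 * i ≤ m → a (m - i) ≤ a i) ∧ ∀ i, 2 * i + 1 < m → a i ≤ a (m - 1 - i)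

/-- The sequence `a 0, …, a m` is top interlacing:
`a 0 ≤ a m ≤ a 1 ≤ a (m-1) ≤ ⋯ ≤ a ⌈m/2⌉`. -/
def TopInterlacing (a : ℕ → ℕ) (m : ℕ) : Prop :=
  (∀ i, 2 * i ≤ m → a i ≤ a (m - i)) ∧ ∀ i, 2 * i + 1 < m → a (m - i) ≤ a (i + 1)

/-- The sequence `a 0, …, a m` is symmetric. -/
def SymmetricSeq (a : ℕ → ℕ) (m : ℕ) : Prop := ∀ k ≤ m, a k = a (m - k)

/-- Rowmotion for the order relation `r` on `Fin m`: `rhoRel r I` is the lower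
ideal generated by the minimal elements of the complement of `I`. -/
def rhoRel {m : ℕ} (r : Fin m → Fin m → Prop) (I : Finset (Fin m)) : Finset (Fin m) :=
  Finset.univ.filter fun x => ∃ y, y ∉ I ∧ (∀ z, r z y → z ≠ y → z ∈ I) ∧ r x y

/-- The (forward) orbit of `I` under a rowmotion map `ρ`. -/
def orbitOf {m : ℕ} (ρ : Finset (Fin m) → Finset (Fin m)) (I : Finset (Fin m)) :
    Finset (Finset (Fin m)) :=
  Finset.univ.filter fun J => ∃ k, ρ^[k] I = J

/-- The number of maximal elements of `I` viewed as a subposet of the order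
with relation `r`. -/
def maxCount {m : ℕ} (r : Fin m → Fin m → Prop) (I : Finset (Fin m)) : ℕ :=
  (I.filter fun x => ∀ y ∈ I, r x y → y = x).card

end

noncomputable section

open Polynomial Matrix

abbrev Pz := Polynomial ℤ

def indF (p : Prop) : Fin 2 := if p then 1 else 0

def goodE (d : Prop) (x y : Fin 2) : Prop :=
  if d then (y : ℕ) ≤ (x : ℕ) else (x : ℕ) ≤ (y : ℕ)

def MM (d : Prop) : Matrix (Fin 2) (Fin 2) Pz :=
  Matrix.of fun x y => if goodE d x y then (X : Pz) ^ (y : ℕ) else 0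

def TT : Matrix (Fin 2) (Fin 2) Pz := !![1 - X, X; X, (X - 1) * X]

def SS : Matrix (Fin 2) (Fin 2) Pz := !![1, 0; 0, X]

lemma transpose_fin_two (a b c d : Pz) :
    (!![a, b; c, d])ᵀ = !![a, c; b, d] := by
  refine Matrix.ext fun i j => ?_
  fin_cases i <;> fin_cases j <;> rfl

lemma MM_pos {p : Prop} (hp : p) : MM p = !![1, 0; 1, X] := by
  refine Matrix.ext fun i j => ?_
  fin_cases i <;> fin_cases j <;>
    simp [MM, goodE, hp]

lemma MM_neg {p : Prop} (hp : ¬ p) : MM p = !![1, X; 0, X] := by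
  refine Matrix.ext fun i j => ?_
  fin_cases i <;> fin_cases j <;>
    simp [MM, goodE, hp]

lemma transp_T (p : Prop) : (MM p)ᵀ * TT = TT * MM p := by
  by_cases hp : p
  · rw [MM_pos hp, transpose_fin_two, TT, Matrix.mul_fin_two, Matrix.mul_fin_two]
    refine Matrix.ext fun i j => ?_
    fin_cases i <;> fin_cases j <;> simp <;> ring
  · rw [MM_neg hp, transpose_fin_two, TT, Matrix.mul_fin_two, Matrix.mul_fin_two]
    refine Matrix.ext fun i j => ?_
    fin_cases i <;> fin_cases j <;> simp <;> ring

lemma transp_S (p : Prop) : (MM p)ᵀ * SS = SS * MM (¬ p) := by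
  by_cases hp : p
  · rw [MM_pos hp, MM_neg (not_not_intro hp), transpose_fin_two, SS,
      Matrix.mul_fin_two, Matrix.mul_fin_two]
    refine Matrix.ext fun i j => ?_
    fin_cases i <;> fin_cases j <;> simp <;> ring
  · rw [MM_neg hp, MM_pos hp, transpose_fin_two, SS,
      Matrix.mul_fin_two, Matrix.mul_fin_two]
    refine Matrix.ext fun i j => ?_
    fin_cases i <;> fin_cases j <;> simp <;> ring

lemma det_TT : TT.det ≠ 0 := by
  intro h
  rw [TT, Matrix.det_fin_two_of] at h
  have := congrArg (Polynomial.eval 2) h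
  simp at this

lemma det_SS : SS.det ≠ 0 := by
  intro h
  rw [SS, Matrix.det_fin_two_of] at h
  simp at h

lemma prod_rel (W : Matrix (Fin 2) (Fin 2) Pz) (φ : Prop → Prop)
    (h : ∀ p, (MM p)ᵀ * W = W * MM (φ p)) (l : List Prop) :
    ((l.map MM).prod)ᵀ * W = W * ((l.reverse.map (fun p => MM (φ p))).prod) := by
  induction l with
  | nil => simp
  | cons p l ih =>
      simp only [List.map_cons, List.prod_cons, Matrix.transpose_mul,
        List.reverse_cons, List.map_append, List.prod_append, List.map_cons,
        List.map_nil, List.prod_cons, List.prod_nil, mul_one]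
      rw [mul_assoc, h p, ← mul_assoc, ih, mul_assoc]

lemma trace_cancel (W : Matrix (Fin 2) (Fin 2) Pz) (hW : W.det ≠ 0)
    (A B : Matrix (Fin 2) (Fin 2) Pz) (h : Aᵀ * W = W * B) :
    A.trace = B.trace := by
  have h1 : W.adjugate * (Aᵀ * W) = W.adjugate * (W * B) := by rw [h]
  have h2 : (W.adjugate * (Aᵀ * W)).trace = (Aᵀ * (W * W.adjugate)).trace := by
    rw [← Matrix.trace_mul_comm, mul_assoc]
  have h3 : (W.adjugate * (W * B)).trace = (W.det • B).trace := by
    rw [← mul_assoc, Matrix.adjugate_mul, Matrix.smul_mul, one_mul]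
  have := congrArg Matrix.trace h1
  rw [h2, h3, Matrix.mul_adjugate] at this
  rw [Matrix.mul_smul, mul_one, Matrix.trace_smul, Matrix.trace_smul,
    Matrix.trace_transpose] at this
  exact mul_left_cancel₀ hW (by simpa [smul_eq_mul] using this)

def PL (l : List Prop) : Pz := ((l.map MM).prod).trace

lemma PL_rev (l : List Prop) : PL l = PL l.reverse := by
  have := prod_rel TT id transp_T l
  have h2 := trace_cancel TT det_TT _ _ this
  simpa [PL] using h2

lemma PL_rev_flip (l : List Prop) : PL l = PL (l.reverse.map Not) := by
  have := prod_rel SS Not transp_S l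
  have h2 := trace_cancel SS det_SS _ _ this
  simpa [PL, List.map_map, Function.comp_def] using h2

lemma PL_flip (l : List Prop) : PL (l.map Not) = PL l := by
  have h1 := PL_rev_flip (l.map Not)
  have e : (l.map Not).reverse.map Not = l.reverse := by
    rw [← List.map_reverse, List.map_map]
    have : (Not ∘ Not) = id := by
      funext p; simp only [Function.comp]; exact propext not_not
    rw [this, List.map_id]
  rw [e] at h1
  rw [h1, ← PL_rev]

lemma PL_rot (a b : List Prop) : PL (a ++ b) = PL (b ++ a) := by
  simp only [PL, List.map_append, List.prod_append]
  exact Matrix.trace_mul_comm _ _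


lemma MM_apply (d : Prop) (x y : Fin 2) :
    MM d x y = if goodE d x y then (X : Pz) ^ (y : ℕ) else 0 := rfl

def stt (a : Fin 2) (I : Finset ℕ) (j : ℕ) : Fin 2 :=
  if j = 0 then a else indF (j ∈ I)

def LOK (n : ℕ) (u : ℕ → Prop) (a : Fin 2) (I : Finset ℕ) : Prop :=
  ∀ e < n, goodE (u e) (stt a I e) (stt a I (e + 1))

def COK (n : ℕ) (u : ℕ → Prop) (I : Finset ℕ) : Prop :=
  ∀ e < n, goodE (u e) (indF (e ∈ I)) (indF ((e + 1) % n ∈ I))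

def PM (n : ℕ) (u : ℕ → Prop) : Matrix (Fin 2) (Fin 2) Pz :=
  ((List.range n).map fun e => MM (u e)).prod

lemma stt_zero (a : Fin 2) (I : Finset ℕ) : stt a I 0 = a := rfl

lemma stt_succ (a : Fin 2) (I : Finset ℕ) (j : ℕ) : stt a I (j + 1) = indF (j + 1 ∈ I) := by
  simp [stt]

lemma stt_insert (a : Fin 2) (I : Finset ℕ) {m j : ℕ} (h : j ≠ m) :
    stt a (insert m I) j = stt a I j := by
  rcases j with _ | j
  · rfl
  · simp only [stt_succ, indF, Finset.mem_insert]
    have : (j + 1 = m ∨ j + 1 ∈ I) ↔ (j + 1 ∈ I) := by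
      constructor
      · rintro (h' | h') ; exact absurd h' h; exact h'
      · exact Or.inr
    simp only [this]; congr

lemma LOK_succ (n : ℕ) (u : ℕ → Prop) (a : Fin 2) (I : Finset ℕ) :
    LOK (n + 1) u a I ↔ LOK n u a I ∧ goodE (u n) (stt a I n) (stt a I (n + 1)) := by
  constructor
  · intro h
    exact ⟨fun e he => h e (Nat.lt_succ_of_lt he), h n (Nat.lt_succ_self n)⟩
  · rintro ⟨h1, h2⟩ e he
    rcases Nat.lt_succ_iff_lt_or_eq.mp he with h' | h'
    · exact h1 e h'
    · subst h'; exact h2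

lemma LOK_insert_top (n : ℕ) (u : ℕ → Prop) (a : Fin 2) (I : Finset ℕ) :
    LOK n u a (insert (n + 1) I) ↔ LOK n u a I := by
  unfold LOK
  apply forall_congr'
  intro e
  apply imp_congr_right
  intro he
  rw [stt_insert a I (by omega), stt_insert a I (by omega)]

theorem PM_eq (n : ℕ) (u : ℕ → Prop) (a b : Fin 2) :
    PM n u a b = ∑ I ∈ (Finset.Ico 1 (n + 1)).powerset,
      if LOK n u a I ∧ stt a I n = b then (X : Pz) ^ I.card else 0 := by
  induction n generalizing b with
  | zero =>
      have h0 : Finset.Ico 1 1 = (∅ : Finset ℕ) := by simp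
      rw [h0]
      simp only [Finset.powerset_empty, Finset.sum_singleton, Finset.card_empty, pow_zero]
      have hL : LOK 0 u a ∅ := fun e he => absurd he (Nat.not_lt_zero e)
      have : PM 0 u a b = if a = b then 1 else 0 := by
        simp [PM, Matrix.one_apply]
      rw [this, stt_zero]
      simp [hL]
  | succ n ih =>
      have hPM : PM (n + 1) u = PM n u * MM (u n) := by
        simp [PM, List.range_succ]
      have hIco : Finset.Ico 1 (n + 2) = insert (n + 1) (Finset.Ico 1 (n + 1)) := by
        ext x
        simp only [Finset.mem_Ico, Finset.mem_insert]
        omega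
      have hnotmem : ∀ I ∈ (Finset.Ico 1 (n + 1)).powerset, n + 1 ∉ I := by
        intro I hI
        intro hmem
        have := Finset.mem_powerset.mp hI hmem
        simp [Finset.mem_Ico] at this
      have hdisj : Disjoint (Finset.Ico 1 (n + 1)).powerset
          ((Finset.Ico 1 (n + 1)).powerset.image (insert (n + 1))) := by
        rw [Finset.disjoint_left]
        intro I hI hI'
        rcases Finset.mem_image.mp hI' with ⟨J, _, hJ⟩
        exact hnotmem I hI (hJ ▸ Finset.mem_insert_self _ _)
      have hinj : ∀ x ∈ (Finset.Ico 1 (n + 1)).powerset,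
          ∀ y ∈ (Finset.Ico 1 (n + 1)).powerset,
          insert (n + 1) x = insert (n + 1) y → x = y := by
        intro x hx y hy hxy
        have := congrArg (fun s => Finset.erase s (n + 1)) hxy
        simpa [Finset.erase_insert (hnotmem x hx), Finset.erase_insert (hnotmem y hy)] using this
      rw [hIco, Finset.powerset_insert, Finset.sum_union hdisj, Finset.sum_image hinj]
      have hmul : PM (n + 1) u a b
          = PM n u a 0 * MM (u n) 0 b + PM n u a 1 * MM (u n) 1 b := by
        rw [hPM, Matrix.mul_apply, Fin.sum_univ_two]
      rw [hmul, ih 0, ih 1, Finset.sum_mul, Finset.sum_mul, ← Finset.sum_add_distrib,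
        ← Finset.sum_add_distrib]
      apply Finset.sum_congr rfl
      intro I hI
      have hn1 : n + 1 ∉ I := hnotmem I hI
      -- basic facts
      have f1 : stt a I (n + 1) = 0 := by
        rw [stt_succ]; simp [indF, hn1]
      have f2 : stt a (insert (n + 1) I) (n + 1) = 1 := by
        rw [stt_succ]; simp [indF]
      have f3 : ∀ j ≤ n, stt a (insert (n + 1) I) j = stt a I j := by
        intro j hj; exact stt_insert a I (by omega)
      have f4 : (insert (n + 1) I).card = I.card + 1 := Finset.card_insert_of_notMem hn1
      rw [LOK_succ, LOK_succ, LOK_insert_top, f1, f2, f3 n le_rfl, f4,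
        MM_apply, MM_apply]
      by_cases hL : LOK n u a I
      · simp only [hL, true_and]
        generalize stt a I n = c
        by_cases hu : u n <;>
          fin_cases c <;> fin_cases b <;>
            simp [goodE, hu, pow_succ] <;> ring
      · simp [hL]

def phiCL (n : ℕ) (J : Finset ℕ) : Finset ℕ := if 0 ∈ J then insert n (J.erase 0) else J
def psiLC (n : ℕ) (I : Finset ℕ) : Finset ℕ := if n ∈ I then insert 0 (I.erase n) else I

lemma indF_congr {p q : Prop} (h : p ↔ q) : indF p = indF q := by
  unfold indF; exact if_congr h rfl rfl

lemma mem_phiCL_top {n : ℕ} (hn : 1 ≤ n) {J : Finset ℕ} (hJ : J ⊆ Finset.range n) :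
    n ∈ phiCL n J ↔ 0 ∈ J := by
  unfold phiCL
  by_cases h0 : 0 ∈ J
  · simp [h0]
  · simp only [h0, if_false, iff_false]
    intro hn'
    exact absurd (Finset.mem_range.mp (hJ hn')) (lt_irrefl n)

lemma mem_phiCL_mid {n : ℕ} {J : Finset ℕ} (hJ : J ⊆ Finset.range n)
    {j : ℕ} (hj0 : j ≠ 0) (hjn : j ≠ n) : (j ∈ phiCL n J ↔ j ∈ J) := by
  unfold phiCL
  by_cases h0 : 0 ∈ J
  · simp only [h0, if_true, Finset.mem_insert, Finset.mem_erase]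
    constructor
    · rintro (h | ⟨_, h⟩); exact absurd h hjn; exact h
    · intro h; exact Or.inr ⟨hj0, h⟩
  · simp [h0]

lemma stt_phiCL {n : ℕ} (hn : 1 ≤ n) {J : Finset ℕ} (hJ : J ⊆ Finset.range n)
    {j : ℕ} (hj : j ≤ n) :
    stt (indF (0 ∈ J)) (phiCL n J) j = indF (j % n ∈ J) := by
  rcases Nat.eq_zero_or_pos j with h0 | h0
  · subst h0
    rw [stt_zero]
    exact indF_congr (by rw [Nat.zero_mod])
  · have hj0 : j ≠ 0 := Nat.pos_iff_ne_zero.mp h0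
    have : stt (indF (0 ∈ J)) (phiCL n J) j = indF (j ∈ phiCL n J) := by
      unfold stt; simp [hj0]
    rw [this]
    rcases eq_or_lt_of_le hj with hjn | hjn
    · subst hjn
      rw [indF_congr (mem_phiCL_top hn hJ), indF_congr (by rw [Nat.mod_self] : (j % j ∈ J) ↔ (0 ∈ J))]
    · rw [indF_congr (mem_phiCL_mid hJ hj0 (Nat.ne_of_lt hjn)),
        indF_congr (by rw [Nat.mod_eq_of_lt hjn] : (j % n ∈ J) ↔ (j ∈ J))]

lemma card_phiCL {n : ℕ} {J : Finset ℕ} (hJ : J ⊆ Finset.range n) :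
    (phiCL n J).card = J.card := by
  unfold phiCL
  by_cases h0 : 0 ∈ J
  · have hnJ : n ∉ J.erase 0 := by
      intro h
      have := Finset.mem_range.mp (hJ (Finset.mem_of_mem_erase h))
      exact absurd this (lt_irrefl n)
    rw [if_pos h0, Finset.card_insert_of_notMem hnJ, Finset.card_erase_of_mem h0]
    have : 1 ≤ J.card := Finset.card_pos.mpr ⟨0, h0⟩
    omega
  · rw [if_neg h0]

theorem trace_eq {n : ℕ} (hn : 1 ≤ n) (u : ℕ → Prop) :
    (PM n u).trace = ∑ J ∈ (Finset.range n).powerset,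
      if COK n u J then (X : Pz) ^ J.card else 0 := by
  have h1 : (PM n u).trace = PM n u 0 0 + PM n u 1 1 := Matrix.trace_fin_two _
  have hstt : ∀ (a : Fin 2) (I : Finset ℕ), stt a I n = indF (n ∈ I) := by
    intro a I
    unfold stt
    rw [if_neg (by omega)]
  rw [h1, PM_eq, PM_eq, ← Finset.sum_add_distrib]
  have h2 : ∀ I ∈ (Finset.Ico 1 (n + 1)).powerset,
      ((if LOK n u 0 I ∧ stt 0 I n = 0 then (X : Pz) ^ I.card else 0)
        + (if LOK n u 1 I ∧ stt 1 I n = 1 then (X : Pz) ^ I.card else 0))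
      = (if LOK n u (indF (n ∈ I)) I then (X : Pz) ^ I.card else 0) := by
    intro I _
    rw [hstt, hstt]
    by_cases hmem : n ∈ I
    · have : indF (n ∈ I) = 1 := by simp [indF, hmem]
      rw [this]
      simp
    · have : indF (n ∈ I) = 0 := by simp [indF, hmem]
      rw [this]
      simp
  rw [Finset.sum_congr rfl h2]
  symm
  refine Finset.sum_nbij' (phiCL n) (psiLC n) ?_ ?_ ?_ ?_ ?_
  · -- maps into pwL
    intro J hJ
    have hJ' := Finset.mem_powerset.mp hJ
    rw [Finset.mem_powerset]
    unfold phiCL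
    by_cases h0 : 0 ∈ J
    · rw [if_pos h0]
      intro x hx
      rcases Finset.mem_insert.mp hx with h | h
      · subst h; rw [Finset.mem_Ico]; omega
      · rw [Finset.mem_Ico]
        have := Finset.mem_range.mp (hJ' (Finset.mem_of_mem_erase h))
        have := (Finset.mem_erase.mp h).1
        omega
    · rw [if_neg h0]
      intro x hx
      have := Finset.mem_range.mp (hJ' hx)
      rw [Finset.mem_Ico]
      have : x ≠ 0 := by rintro rfl; exact h0 hx
      omega
  · -- maps back
    intro I hI
    have hI' := Finset.mem_powerset.mp hI
    rw [Finset.mem_powerset]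
    unfold psiLC
    by_cases hmem : n ∈ I
    · rw [if_pos hmem]
      intro x hx
      rcases Finset.mem_insert.mp hx with h | h
      · subst h; rw [Finset.mem_range]; omega
      · have h1 := Finset.mem_Ico.mp (hI' (Finset.mem_of_mem_erase h))
        have h2 := (Finset.mem_erase.mp h).1
        rw [Finset.mem_range]; omega
    · rw [if_neg hmem]
      intro x hx
      have h1 := Finset.mem_Ico.mp (hI' hx)
      have : x ≠ n := by rintro rfl; exact hmem hx
      rw [Finset.mem_range]; omega
  · -- left inverse
    intro J hJ
    have hJ' := Finset.mem_powerset.mp hJ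
    have hnJ : n ∉ J := fun h => absurd (Finset.mem_range.mp (hJ' h)) (lt_irrefl n)
    unfold phiCL psiLC
    by_cases h0 : 0 ∈ J
    · rw [if_pos h0]
      have hnE : n ∉ J.erase 0 := fun h => hnJ (Finset.mem_of_mem_erase h)
      rw [if_pos (Finset.mem_insert_self _ _), Finset.erase_insert hnE,
        Finset.insert_erase h0]
    · rw [if_neg h0, if_neg hnJ]
  · -- right inverse
    intro I hI
    have hI' := Finset.mem_powerset.mp hI
    have h0I : 0 ∉ I := fun h => by
      have := Finset.mem_Ico.mp (hI' h); omega
    unfold phiCL psiLC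
    by_cases hmem : n ∈ I
    · rw [if_pos hmem]
      have h0E : 0 ∉ I.erase n := fun h => h0I (Finset.mem_of_mem_erase h)
      rw [if_pos (Finset.mem_insert_self _ _), Finset.erase_insert h0E,
        Finset.insert_erase hmem]
    · rw [if_neg hmem, if_neg h0I]
  · -- value equality
    intro J hJ
    have hJ' := Finset.mem_powerset.mp hJ
    have hCL : COK n u J ↔ LOK n u (indF (n ∈ phiCL n J)) (phiCL n J) := by
      rw [indF_congr (mem_phiCL_top hn hJ')]
      unfold COK LOK
      apply forall_congr'
      intro e
      apply imp_congr_right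
      intro he
      rw [stt_phiCL hn hJ' (le_of_lt he), stt_phiCL hn hJ' (by omega : e + 1 ≤ n),
        Nat.mod_eq_of_lt he]
    rw [card_phiCL hJ']
    simp only [hCL]

-- ############ linking PL (list level) with PM (function level)


lemma PL_PM (n : ℕ) (u : ℕ → Prop) : PL ((List.range n).map u) = (PM n u).trace := by
  simp only [PL, PM, List.map_map]
  rfl

lemma PP_rot (n m : ℕ) (hm : m ≤ n) (u : ℕ → Prop)
    (hrot : ∀ (a b : List Prop), PL (a ++ b) = PL (b ++ a)) :
    (PM n (fun e => u ((e + m) % n))).trace = (PM n u).trace := by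
  rw [← PL_PM, ← PL_PM]
  set k := n - m with hk
  have hn : n = m + k := by omega
  have h1 : (List.range n).map u
      = (List.range m).map u ++ (List.range k).map (fun x => u (m + x)) := by
    rw [hn, List.range_add, List.map_append, List.map_map]
    rfl
  have h2 : (List.range n).map (fun e => u ((e + m) % n))
      = (List.range k).map (fun x => u (m + x)) ++ (List.range m).map u := by
    have hn2 : n = k + m := by omega
    rw [hn2, List.range_add, List.map_append, List.map_map]
    congr 1
    · apply List.map_congr_left
      intro e he
      have he' : e < k := List.mem_range.mp he
      have : (e + m) % (k + m) = e + m := Nat.mod_eq_of_lt (by omega)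
      rw [this, Nat.add_comm]
    · apply List.map_congr_left
      intro x hx
      have hx' : x < m := List.mem_range.mp hx
      simp only [Function.comp]
      have : (k + x + m) % (k + m) = x := by
        rw [show k + x + m = (k + m) + x by omega, Nat.add_mod_left,
          Nat.mod_eq_of_lt (by omega)]
      rw [this]
  rw [h2, hrot, ← h1]

lemma PP_flip (n : ℕ) (u : ℕ → Prop)
    (hflip : ∀ (l : List Prop), PL (l.map Not) = PL l) :
    (PM n (fun e => ¬ u e)).trace = (PM n u).trace := by
  rw [← PL_PM, ← PL_PM]
  have : (List.range n).map (fun e => ¬ u e) = ((List.range n).map u).map Not := by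
    rw [List.map_map]; rfl
  rw [this, hflip]

-- ############ coefficient extraction

lemma coeff_ideal_sum (s : Finset (Finset ℕ)) (P : Finset ℕ → Prop) (j : ℕ) :
    (∑ I ∈ s, if P I then (X : Pz) ^ I.card else 0).coeff j
      = ((s.filter (fun I => P I ∧ I.card = j)).card : ℤ) := by
  rw [Polynomial.finset_sum_coeff, Finset.card_filter, Nat.cast_sum]
  apply Finset.sum_congr rfl
  intro I _
  by_cases hP : P I
  · rw [if_pos hP]
    rw [Polynomial.coeff_X_pow]
    by_cases hc : I.card = j
    · rw [if_pos (hc.symm), if_pos ⟨hP, hc⟩]; simp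
    · rw [if_neg (fun h => hc h.symm), if_neg (fun h => hc h.2)]; simp
  · rw [if_neg hP, if_neg (fun h => hP h.1)]
    simp

def cardCOK (n : ℕ) (u : ℕ → Prop) (j : ℕ) : ℕ :=
  ((Finset.range n).powerset.filter (fun I => COK n u I ∧ I.card = j)).card

lemma cardCOK_congr (n : ℕ) {u v : ℕ → Prop} (h : ∀ e < n, u e ↔ v e) (j : ℕ) :
    cardCOK n u j = cardCOK n v j := by
  unfold cardCOK
  congr 1
  apply Finset.filter_congr
  intro I _
  have : COK n u I ↔ COK n v I := by
    unfold COK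
    apply forall_congr'
    intro e
    apply imp_congr_right
    intro he
    rw [show u e = v e from propext (h e he)]
  rw [this]

lemma cardCOK_of_trace {n : ℕ} (hn : 1 ≤ n) (u v : ℕ → Prop)
    (h : (PM n u).trace = (PM n v).trace) (j : ℕ) :
    cardCOK n u j = cardCOK n v j := by
  have h1 := trace_eq hn u
  have h2 := trace_eq hn v
  rw [h1, h2] at h
  have h3 := congrArg (fun p => Polynomial.coeff p j) h
  rw [coeff_ideal_sum, coeff_ideal_sum] at h3
  exact_mod_cast h3

lemma goodE_indF (d P Q : Prop) :
    goodE d (indF P) (indF Q) ↔ (d → (Q → P)) ∧ (¬ d → (P → Q)) := by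
  unfold goodE indF
  by_cases hd : d <;> by_cases hP : P <;> by_cases hQ : Q <;> simp [hd, hP, hQ]

lemma isCIdeal_iff (γ : List ℕ) (I : Finset (Fin γ.sum)) :
    IsCIdeal γ I ↔ ∀ x y, cStep γ x y → y ∈ I → x ∈ I := by
  constructor
  · intro h x y hs
    exact h x y (Relation.ReflTransGen.single hs)
  · intro h x y hle
    induction hle with
    | refl => exact id
    | tail _ hbc ih => exact fun hy => ih (h _ _ hbc hy)

lemma stepClosed_iff (γ : List ℕ) (hn : 0 < γ.sum) (I : Finset (Fin γ.sum)) :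
    (∀ x y, cStep γ x y → y ∈ I → x ∈ I)
      ↔ COK γ.sum (upEdge γ) (I.map Fin.valEmbedding) := by
  have hmem : ∀ (x : Fin γ.sum), ((x : ℕ) ∈ I.map Fin.valEmbedding) ↔ x ∈ I := by
    intro x
    exact Finset.mem_map' _
  constructor
  · intro h e he
    rw [goodE_indF]
    constructor
    · intro hu hQ
      have hlt : (e + 1) % γ.sum < γ.sum := Nat.mod_lt _ hn
      have hstep : cStep γ ⟨e, he⟩ ⟨(e + 1) % γ.sum, hlt⟩ := Or.inl ⟨rfl, hu⟩
      have := h _ _ hstep ((hmem ⟨(e + 1) % γ.sum, hlt⟩).mp hQ)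
      exact (hmem ⟨e, he⟩).mpr this
    · intro hu hP
      have hlt : (e + 1) % γ.sum < γ.sum := Nat.mod_lt _ hn
      have hstep : cStep γ ⟨(e + 1) % γ.sum, hlt⟩ ⟨e, he⟩ := Or.inr ⟨rfl, hu⟩
      have := h _ _ hstep ((hmem ⟨e, he⟩).mp hP)
      exact (hmem ⟨(e + 1) % γ.sum, hlt⟩).mpr this
  · intro h x y hstep hy
    rcases hstep with ⟨hyv, hup⟩ | ⟨hxv, hup⟩
    · have := ((goodE_indF _ _ _).mp (h x.val x.isLt)).1 hup
      have hx := this (by rw [← hyv]; exact (hmem y).mpr hy)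
      exact (hmem x).mp hx
    · have := ((goodE_indF _ _ _).mp (h y.val y.isLt)).2 hup
      have hx := this ((hmem y).mpr hy)
      rw [← hxv] at hx
      exact (hmem x).mp hx

lemma attachFin_map (n : ℕ) (J : Finset ℕ) (hb : ∀ m ∈ J, m < n) :
    (J.attachFin hb).map Fin.valEmbedding = J := by
  ext a
  simp only [Finset.mem_map, Finset.mem_attachFin, Fin.valEmbedding_apply]
  constructor
  · rintro ⟨x, hx, rfl⟩; exact hx
  · intro ha; exact ⟨⟨a, hb a ha⟩, ha, rfl⟩

lemma cRank_eq_cardCOK (γ : List ℕ) (hn : 0 < γ.sum) (j : ℕ) :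
    cRank γ j = cardCOK γ.sum (upEdge γ) j := by
  rw [_root_.cRank.eq_1, Nat.card_eq_fintype_card, Fintype.card_subtype, cardCOK]
  refine Finset.card_nbij (fun I => I.map Fin.valEmbedding) ?_ ?_ ?_
  · intro I hI
    rw [Finset.mem_coe, Finset.mem_filter] at hI
    rw [Finset.mem_coe, Finset.mem_filter, Finset.mem_powerset]
    refine ⟨?_, ?_, ?_⟩
    · intro a ha
      rcases Finset.mem_map.mp ha with ⟨x, _, rfl⟩
      exact Finset.mem_range.mpr x.isLt
    · exact (stepClosed_iff γ hn I).mp ((isCIdeal_iff γ I).mp hI.2.1)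
    · rw [Finset.card_map]; exact hI.2.2
  · intro I _ I' _ h
    exact Finset.map_injective _ h
  · intro J hJ
    rw [Finset.mem_coe, Finset.mem_filter, Finset.mem_powerset] at hJ
    have hb : ∀ m ∈ J, m < γ.sum := fun m hm => Finset.mem_range.mp (hJ.1 hm)
    refine ⟨J.attachFin hb, ?_, ?_⟩
    · rw [Finset.mem_coe, Finset.mem_filter]
      refine ⟨Finset.mem_univ _, ?_, ?_⟩
      · rw [isCIdeal_iff, stepClosed_iff γ hn, attachFin_map]
        exact hJ.2.1
      · rw [← Finset.card_map (f := Fin.valEmbedding), attachFin_map]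
        exact hJ.2.2
    · exact attachFin_map γ.sum J hb

lemma sum_take_le (t : List ℕ) (k : ℕ) : (t.take k).sum ≤ t.sum := by
  have := List.sum_take_add_sum_drop t k
  omega

lemma segIdx_low (h : ℕ) (t : List ℕ) {e : ℕ} (he : e < h) : segIdx (h :: t) e = 0 := by
  unfold segIdx
  rw [List.filter_eq_nil_iff.mpr]
  · rfl
  · intro j _
    simp only [decide_eq_true_eq, not_le]
    rw [List.take_succ_cons, List.sum_cons]
    omega

lemma segIdx_beta_low (h : ℕ) (t : List ℕ) {e : ℕ} (he : e < t.sum) :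
    segIdx (t ++ [h]) e
      = ((List.range t.length).filter fun j => decide ((t.take (j + 1)).sum ≤ e)).length := by
  unfold segIdx
  rw [List.length_append, List.length_singleton, List.range_succ, List.filter_append]
  have h2 : (List.filter (fun j => decide (((t ++ [h]).take (j + 1)).sum ≤ e)) [t.length]) = [] := by
    rw [List.filter_eq_nil_iff]
    intro j hj
    rw [List.mem_singleton] at hj
    subst hj
    simp only [decide_eq_true_eq, not_le]
    rw [List.take_of_length_le (by simp), List.sum_append, List.sum_cons, List.sum_nil]
    omega
  rw [h2, List.append_nil]
  congr 1
  apply List.filter_congr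
  intro j hj
  rw [List.mem_range] at hj
  rw [decide_eq_decide]
  rw [List.take_append_of_le_length (by omega)]

lemma segIdx_beta_high (h : ℕ) (t : List ℕ) {e : ℕ} (he1 : t.sum ≤ e) (he2 : e < t.sum + h) :
    segIdx (t ++ [h]) e = t.length := by
  unfold segIdx
  rw [List.length_append, List.length_singleton, List.range_succ, List.filter_append]
  have h2 : (List.filter (fun j => decide (((t ++ [h]).take (j + 1)).sum ≤ e)) [t.length]) = [] := by
    rw [List.filter_eq_nil_iff]
    intro j hj
    rw [List.mem_singleton] at hj
    subst hj
    simp only [decide_eq_true_eq, not_le]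
    rw [List.take_of_length_le (by simp), List.sum_append, List.sum_cons, List.sum_nil]
    omega
  have h1 : (List.filter (fun j => decide (((t ++ [h]).take (j + 1)).sum ≤ e)) (List.range t.length))
      = List.range t.length := by
    rw [List.filter_eq_self]
    intro j hj
    rw [List.mem_range] at hj
    simp only [decide_eq_true_eq]
    rw [List.take_append_of_le_length (by omega)]
    exact le_trans (sum_take_le t (j + 1)) he1
  rw [h1, h2, List.append_nil, List.length_range]

lemma segIdx_alpha_shift (h : ℕ) (t : List ℕ) {e : ℕ} (he : e < t.sum) :
    segIdx (h :: t) (e + h) = segIdx (t ++ [h]) e + 1 := by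
  rw [segIdx_beta_low h t he]
  unfold segIdx
  rw [List.length_cons, List.range_succ_eq_map]
  rw [List.filter_cons_of_pos (by
    simp only [decide_eq_true_eq]
    rw [List.take_succ_cons, List.take_zero, List.sum_cons, List.sum_nil]
    omega)]
  rw [List.length_cons, List.filter_map, List.length_map]
  have hcong : List.filter ((fun j => decide (((h :: t).take (j + 1)).sum ≤ e + h)) ∘ Nat.succ)
        (List.range t.length)
      = List.filter (fun j => decide ((t.take (j + 1)).sum ≤ e)) (List.range t.length) := by
    apply List.filter_congr
    intro j hj
    rw [List.mem_range] at hj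
    show decide (((h :: t).take (j + 1 + 1)).sum ≤ e + h) = _
    rw [decide_eq_decide, List.take_succ_cons, List.sum_cons]
    omega
  rw [hcong]

lemma upEdge_rot (h : ℕ) (t : List ℕ) (heven : Even (h :: t).length) {e : ℕ}
    (he : e < (h :: t).sum) :
    upEdge (t ++ [h]) e ↔ ¬ upEdge (h :: t) ((e + h) % (h :: t).sum) := by
  have hsum : (h :: t).sum = h + t.sum := List.sum_cons
  by_cases hcase : e < t.sum
  · have hmod : (e + h) % (h :: t).sum = e + h := Nat.mod_eq_of_lt (by omega)
    rw [hmod]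
    unfold upEdge
    rw [segIdx_alpha_shift h t hcase, Nat.even_add_one, not_not]
  · have hts : t.sum ≤ e := le_of_not_gt hcase
    have hn0 : 0 < (h :: t).sum := by omega
    have hmod : (e + h) % (h :: t).sum = e - t.sum := by
      have : e + h = (h :: t).sum + (e - t.sum) := by omega
      rw [this, Nat.add_mod_left, Nat.mod_eq_of_lt (by omega)]
    rw [hmod]
    unfold upEdge
    rw [segIdx_low h t (by omega), segIdx_beta_high h t hts (by omega)]
    have hlen : Even (t.length + 1) := by simpa [List.length_cons] using heven
    have : ¬ Even t.length := by
      rw [Nat.even_add_one] at hlen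
      exact hlen
    simp [this]

lemma cRank_rotate_one (α : List ℕ) (hα : IsComposition α) (heven : Even α.length) (j : ℕ) :
    cRank α j = cRank (α.rotate 1) j := by
  obtain ⟨h, t, rfl⟩ : ∃ h t, α = h :: t := by
    cases α with
    | nil => exact absurd rfl hα.1
    | cons h t => exact ⟨h, t, rfl⟩
  have hrot : (h :: t).rotate 1 = t ++ [h] := by
    rw [List.rotate_cons_succ, List.rotate_zero]
  rw [hrot]
  have hh : 0 < h := hα.2 h List.mem_cons_self
  have hsum : (h :: t).sum = h + t.sum := List.sum_cons
  have hsum2 : (t ++ [h]).sum = (h :: t).sum := by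
    rw [List.sum_append, List.sum_cons, List.sum_nil, hsum]
    omega
  have hn : 0 < (h :: t).sum := by omega
  have hn2 : 0 < (t ++ [h]).sum := by rw [hsum2]; exact hn
  rw [cRank_eq_cardCOK _ hn j, cRank_eq_cardCOK _ hn2 j, hsum2]
  have step1 : cardCOK (h :: t).sum (upEdge (t ++ [h])) j
      = cardCOK (h :: t).sum (fun e => ¬ upEdge (h :: t) ((e + h) % (h :: t).sum)) j := by
    apply cardCOK_congr
    intro e he
    exact upEdge_rot h t heven he
  rw [step1]
  apply cardCOK_of_trace hn
  have h1 : (PM (h :: t).sum (fun e => ¬ upEdge (h :: t) ((e + h) % (h :: t).sum))).trace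
      = (PM (h :: t).sum (fun e => upEdge (h :: t) ((e + h) % (h :: t).sum))).trace :=
    PP_flip _ _ PL_flip
  have h2 : (PM (h :: t).sum (fun e => upEdge (h :: t) ((e + h) % (h :: t).sum))).trace
      = (PM (h :: t).sum (upEdge (h :: t))).trace :=
    PP_rot _ h (by omega) _ PL_rot
  rw [h1, h2]

lemma cRank_rotate_aux :
    ∀ (k : ℕ) (α : List ℕ), IsComposition α → Even α.length →
      ∀ j, cRank α j = cRank (α.rotate k) j := by
  intro k
  induction k with
  | zero => intro α _ _ j; rw [List.rotate_zero]
  | succ k ih =>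
      intro α hα he j
      have h1 := cRank_rotate_one α hα he j
      have hcomp : IsComposition (α.rotate 1) := by
        constructor
        · intro hnil
          have := List.length_rotate α 1
          rw [hnil] at this
          simp only [List.length_nil] at this
          have : α = [] := List.length_eq_zero_iff.mp this.symm
          exact hα.1 this
        · intro p hp
          exact hα.2 p (List.mem_rotate.mp hp)
      have heven1 : Even (α.rotate 1).length := by
        rw [List.length_rotate]; exact he
      have h2 := ih (α.rotate 1) hcomp heven1 j
      rw [h1, h2, List.rotate_rotate, Nat.add_comm]

end

/-- The rank sequence of a circular fence poset is invariant under
cyclic shifts of the composition (`α.rotate k = α.drop k ++ α.take k`). -/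
theorem circular_rank_rotate (α : List ℕ) (hα : IsComposition α)
    (heven : Even α.length) (k : ℕ) :
    ∀ j, cRank α j = cRank (α.rotate k) j :=
  cRank_rotate_aux k α hα heven
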